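/- Let h : [0,∞) → ℝ be Lipschitz with Lipschitz constant ‖h'‖_∞, and f_h the standard solution of the half-normal Stein equation. Then for all x ≥ 0, |f_h(x)| ≤ ‖h'‖_∞ · (1 - sqrt(2/π)·(1-Φ(x))/φ(x)) ≤ ‖h'‖_∞. -/

import Mathlib

open MeasureTheory ProbabilityTheory Real Set Filter

/-- Standard normal density. -/
noncomputable def stdPhi (x : ℝ) : ℝ := Real.exp (-x^2/2) / Real.sqrt (2*Real.pi)

/-- Standard normal distribution function. -/
noncomputable def stdCDF (x : ℝ) : ℝ := ∫ t in Set.Iic x, stdPhi t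

/-- `E[h(|Z|)]` for `Z` standard normal. -/
noncomputable def Ehn (h : ℝ → ℝ) : ℝ := ∫ z, h |z| ∂(gaussianReal 0 1)

/-- The standard solution of the half-normal Stein equation. -/
noncomputable def fh (h : ℝ → ℝ) (x : ℝ) : ℝ :=
  (stdPhi x)⁻¹ * ∫ t in (0:ℝ)..x, (h t - Ehn h) * stdPhi t

lemma stdPhi_pos (x : ℝ) : 0 < stdPhi x := by
  unfold stdPhi
  positivity

lemma stdPhi_nonneg (x : ℝ) : 0 ≤ stdPhi x := (stdPhi_pos x).le

lemma stdPhi_neg (x : ℝ) : stdPhi (-x) = stdPhi x := by unfold stdPhi; rw [neg_pow]; ring_nf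

lemma stdPhi_abs (x : ℝ) : stdPhi |x| = stdPhi x := by
  rcases abs_choice x with h | h <;> rw [h]
  exact stdPhi_neg x

lemma continuous_stdPhi : Continuous stdPhi := by
  unfold stdPhi; fun_prop

lemma stdPhi_eq (x : ℝ) : stdPhi x = (Real.sqrt (2*Real.pi))⁻¹ * Real.exp (-(1/2) * x^2) := by
  unfold stdPhi; rw [div_eq_inv_mul]; ring_nf

lemma integrable_stdPhi : Integrable stdPhi := by
  have : stdPhi = fun x => (Real.sqrt (2*Real.pi))⁻¹ * Real.exp (-(1/2) * x^2) := funext stdPhi_eq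
  rw [this]
  exact (integrable_exp_neg_mul_sq (by norm_num)).const_mul _

lemma integrable_mul_stdPhi : Integrable (fun x => x * stdPhi x) := by
  have : (fun x => x * stdPhi x) = fun x => (Real.sqrt (2*Real.pi))⁻¹ * (x * Real.exp (-(1/2) * x^2)) := by
    funext x; rw [stdPhi_eq]; ring
  rw [this]
  exact (integrable_mul_exp_neg_mul_sq (by norm_num)).const_mul _

lemma integrable_abs_mul_stdPhi : Integrable (fun x => |x| * stdPhi x) := by
  have := integrable_mul_stdPhi.abs
  refine this.congr (Eventually.of_forall fun x => ?_)
  simp only [abs_mul, abs_of_nonneg (stdPhi_nonneg x)]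

lemma integral_stdPhi : ∫ x, stdPhi x = 1 := by
  have h := integral_gaussian (1/2 : ℝ)
  simp only [funext stdPhi_eq]
  rw [MeasureTheory.integral_const_mul, h]
  rw [show Real.pi / (1/2) = 2 * Real.pi by ring]
  rw [inv_mul_cancel₀ (Real.sqrt_ne_zero'.mpr (by positivity))]

lemma hasDerivAt_neg_stdPhi (t : ℝ) : HasDerivAt (fun u => -stdPhi u) (t * stdPhi t) t := by
  have h1 : HasDerivAt (fun u : ℝ => -u^2/2) (-t) t := by
    have := ((hasDerivAt_pow 2 t).neg).div_const 2
    simpa using this.congr_deriv (by ring)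
  have h2 : HasDerivAt (fun u : ℝ => Real.exp (-u^2/2)) (Real.exp (-t^2/2) * (-t)) t := h1.exp
  have h3 : HasDerivAt (fun u => stdPhi u) (Real.exp (-t^2/2) * (-t) / Real.sqrt (2*Real.pi)) t :=
    h2.div_const _
  have := h3.neg
  rw [show t * stdPhi t = -(Real.exp (-t^2/2) * (-t) / Real.sqrt (2*Real.pi)) by unfold stdPhi; ring]
  exact this

lemma tendsto_stdPhi_atTop : Tendsto stdPhi atTop (nhds 0) := by
  have h1 : Tendsto (fun x : ℝ => -x^2/2) atTop atBot := by
    apply Tendsto.atBot_div_const (by norm_num)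
    exact tendsto_neg_atBot_iff.mpr (tendsto_pow_atTop (by norm_num))
  have h2 : Tendsto (fun x : ℝ => Real.exp (-x^2/2)) atTop (nhds 0) :=
    Real.tendsto_exp_atBot.comp h1
  have := h2.div_const (Real.sqrt (2*Real.pi))
  unfold stdPhi
  simpa using this

lemma integral_mul_stdPhi_Ioi : ∫ t in Ioi (0:ℝ), t * stdPhi t = stdPhi 0 := by
  have := integral_Ioi_of_hasDerivAt_of_tendsto' (f := fun u => -stdPhi u)
    (f' := fun t => t * stdPhi t) (a := 0) (m := 0)
    (fun t _ => hasDerivAt_neg_stdPhi t) integrable_mul_stdPhi.integrableOn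
    (by simpa using tendsto_stdPhi_atTop.neg)
  simpa using this

lemma integral_mul_stdPhi_interval (x : ℝ) :
    ∫ t in (0:ℝ)..x, t * stdPhi t = stdPhi 0 - stdPhi x := by
  have := intervalIntegral.integral_eq_sub_of_hasDerivAt
    (f := fun u => -stdPhi u) (f' := fun t => t * stdPhi t) (a := 0) (b := x)
    (fun t _ => hasDerivAt_neg_stdPhi t)
    ((continuous_id.mul continuous_stdPhi).intervalIntegrable 0 x)
  rw [this]; ring

lemma integral_stdPhi_Iic_zero : ∫ t in Iic (0:ℝ), stdPhi t = 1/2 := by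
  have hsym : ∫ t in Iic (0:ℝ), stdPhi t = ∫ t in Ioi (0:ℝ), stdPhi t := by
    rw [← neg_zero, ← integral_comp_neg_Iic]
    simp [stdPhi_neg, neg_zero]
  have hsplit : (∫ t in Iic (0:ℝ), stdPhi t) + ∫ t in Ioi (0:ℝ), stdPhi t = 1 := by
    rw [← integral_stdPhi]
    exact intervalIntegral.integral_Iic_add_Ioi integrable_stdPhi.integrableOn integrable_stdPhi.integrableOn
  linarith [hsym, hsplit]

lemma integral_stdPhi_Ioi_zero : ∫ t in Ioi (0:ℝ), stdPhi t = 1/2 := by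
  have hsym : ∫ t in Iic (0:ℝ), stdPhi t = ∫ t in Ioi (0:ℝ), stdPhi t := by
    rw [← neg_zero, ← integral_comp_neg_Iic]
    simp [stdPhi_neg, neg_zero]
  rw [← hsym]; exact integral_stdPhi_Iic_zero

lemma stdCDF_zero : stdCDF 0 = 1/2 := integral_stdPhi_Iic_zero

lemma stdCDF_le_one (x : ℝ) : stdCDF x ≤ 1 := by
  rw [← integral_stdPhi]
  exact setIntegral_le_integral integrable_stdPhi
    (Eventually.of_forall fun t => stdPhi_nonneg t)

lemma interval_stdPhi (x : ℝ) : ∫ t in (0:ℝ)..x, stdPhi t = stdCDF x - 1/2 := by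
  rw [← intervalIntegral.integral_Iic_sub_Iic integrable_stdPhi.integrableOn integrable_stdPhi.integrableOn]
  rw [show (∫ t in Iic (0:ℝ), stdPhi t) = 1/2 from integral_stdPhi_Iic_zero]
  rfl

lemma gaussianPDFReal_eq_stdPhi : gaussianPDFReal 0 1 = stdPhi := by
  funext x
  unfold gaussianPDFReal stdPhi
  push_cast
  rw [mul_one, inv_mul_eq_div, div_eq_div_iff (by positivity) (by positivity)]
  ring_nf

lemma integral_gaussianReal_eq (g : ℝ → ℝ) :
    ∫ z, g z ∂(gaussianReal 0 1) = ∫ z, g z * stdPhi z := by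
  rw [gaussianReal_of_var_ne_zero _ one_ne_zero]
  unfold gaussianPDF
  have : (fun x => ENNReal.ofReal (gaussianPDFReal 0 1 x))
      = fun x => ((Real.toNNReal (gaussianPDFReal 0 1 x) : NNReal) : ENNReal) := rfl
  rw [this, integral_withDensity_eq_integral_smul
    ((measurable_gaussianPDFReal 0 1).real_toNNReal) g]
  congr 1
  funext x
  rw [NNReal.smul_def, smul_eq_mul, Real.coe_toNNReal _ (gaussianPDFReal_nonneg 0 1 x),
    gaussianPDFReal_eq_stdPhi, mul_comm]

lemma Ehn_eq (h : ℝ → ℝ) : Ehn h = 2 * ∫ t in Ioi (0:ℝ), h t * stdPhi t := by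
  unfold Ehn
  rw [integral_gaussianReal_eq]
  have : (fun z => h |z| * stdPhi z) = fun z => (fun u => h u * stdPhi u) |z| := by
    funext z; rw [← stdPhi_abs z]
  rw [this]
  exact integral_comp_abs (f := fun u => h u * stdPhi u)

lemma integrable_linGrowth_mul_stdPhi {g : ℝ → ℝ} (hg : Continuous g) {a b : ℝ}
    (hbound : ∀ t, |g t| ≤ a + b * |t|) : Integrable (fun t => g t * stdPhi t) := by
  refine Integrable.mono' (g := fun t => a * stdPhi t + b * (|t| * stdPhi t))
    ((integrable_stdPhi.const_mul a).add (integrable_abs_mul_stdPhi.const_mul b))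
    ((hg.mul continuous_stdPhi).aestronglyMeasurable) ?_
  filter_upwards with t
  have h1 := stdPhi_nonneg t
  have h2 := hbound t
  calc ‖g t * stdPhi t‖ = |g t| * stdPhi t := by
        rw [norm_eq_abs, abs_mul, abs_of_nonneg h1]
    _ ≤ (a + b * |t|) * stdPhi t := mul_le_mul_of_nonneg_right h2 h1
    _ = a * stdPhi t + b * (|t| * stdPhi t) := by ring

lemma key_mono (G : ℝ → ℝ) (hmono : Monotone G)
    (hint : Integrable (fun t => G t * stdPhi t)) {x : ℝ} (hx : 0 ≤ x) :
    ∫ t in (0:ℝ)..x, G t * stdPhi t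
      ≤ (2 * ∫ t in Ioi (0:ℝ), G t * stdPhi t) * (stdCDF x - 1/2) := by
  set F := fun t => G t * stdPhi t with hF
  set A := ∫ t in Ioc (0:ℝ) x, F t with hA
  set B := ∫ t in Ioi x, F t with hB
  set mA := ∫ t in Ioc (0:ℝ) x, stdPhi t with hmA
  set mB := ∫ t in Ioi x, stdPhi t with hmB
  have hdisj : Disjoint (Ioc (0:ℝ) x) (Ioi x) := Ioc_disjoint_Ioi le_rfl
  have hunion : Ioc (0:ℝ) x ∪ Ioi x = Ioi (0:ℝ) := Ioc_union_Ioi_eq_Ioi hx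
  have hsplitF : (∫ t in Ioi (0:ℝ), F t) = A + B := by
    rw [← hunion, setIntegral_union hdisj measurableSet_Ioi hint.integrableOn hint.integrableOn]
  have hsplitphi : mA + mB = 1/2 := by
    rw [hmA, hmB, ← setIntegral_union hdisj measurableSet_Ioi
      integrable_stdPhi.integrableOn integrable_stdPhi.integrableOn, hunion,
      integral_stdPhi_Ioi_zero]
  have hmA0 : 0 ≤ mA := setIntegral_nonneg measurableSet_Ioc fun t _ => stdPhi_nonneg t
  have hmB0 : 0 ≤ mB := setIntegral_nonneg measurableSet_Ioi fun t _ => stdPhi_nonneg t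
  have hAle : A ≤ G x * mA := by
    rw [hA, hmA, ← integral_const_mul]
    refine setIntegral_mono_on hint.integrableOn
      ((integrable_stdPhi.const_mul (G x)).integrableOn) measurableSet_Ioc fun t ht => ?_
    exact mul_le_mul_of_nonneg_right (hmono ht.2) (stdPhi_nonneg t)
  have hBge : G x * mB ≤ B := by
    rw [hB, hmB, ← integral_const_mul]
    refine setIntegral_mono_on ((integrable_stdPhi.const_mul (G x)).integrableOn)
      hint.integrableOn measurableSet_Ioi fun t ht => ?_
    exact mul_le_mul_of_nonneg_right (hmono (le_of_lt ht)) (stdPhi_nonneg t)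
  have hcdf : stdCDF x - 1/2 = mA := by
    rw [← interval_stdPhi, intervalIntegral.integral_of_le hx]
  have hival : ∫ t in (0:ℝ)..x, F t = A := intervalIntegral.integral_of_le hx
  rw [hival, hsplitF, hcdf]
  have hAmb : A * mB ≤ B * mA := by
    nlinarith [mul_le_mul_of_nonneg_right hAle hmB0, mul_le_mul_of_nonneg_right hBge hmA0]
  have h2 : A * (mA + mB) = A * (1/2) := by rw [hsplitphi]
  nlinarith [hAmb, h2]

lemma sqrt_two_div_pi : Real.sqrt (2/Real.pi) = 2 * stdPhi 0 := by
  have hphi0 : stdPhi 0 = (Real.sqrt (2*Real.pi))⁻¹ := by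
    unfold stdPhi; norm_num
  have hs : (0:ℝ) < Real.sqrt (2*Real.pi) := Real.sqrt_pos.mpr (by positivity)
  rw [hphi0, show (2:ℝ) * (Real.sqrt (2*Real.pi))⁻¹ = 2 / Real.sqrt (2*Real.pi) by ring,
    eq_div_iff (ne_of_gt hs), ← Real.sqrt_mul (by positivity),
    show (2/Real.pi) * (2*Real.pi) = 4 by field_simp; ring,
    show (4:ℝ) = 2^2 by norm_num, Real.sqrt_sq (by norm_num)]

theorem stmt8 (h : ℝ → ℝ) (L : NNReal) (hh : LipschitzOnWith L h (Set.Ici 0)) :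
    ∀ x : ℝ, 0 ≤ x →
      |fh h x| ≤ (L : ℝ) * (1 - Real.sqrt (2/Real.pi) * (1 - stdCDF x) / stdPhi x) ∧
      |fh h x| ≤ (L : ℝ) := by
  intro x hx
  set H : ℝ → ℝ := fun z => h |z| with hHdef
  have hH : LipschitzWith L H := by
    refine LipschitzWith.of_dist_le_mul fun a b => ?_
    calc dist (H a) (H b) ≤ L * dist |a| |b| :=
          hh.dist_le_mul _ (Set.mem_Ici.mpr (abs_nonneg a)) _ (Set.mem_Ici.mpr (abs_nonneg b))
      _ ≤ L * dist a b := by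
          refine mul_le_mul_of_nonneg_left ?_ L.coe_nonneg
          rw [Real.dist_eq, Real.dist_eq]
          exact abs_abs_sub_abs_le_abs_sub a b
  have hHd : ∀ a b : ℝ, |H a - H b| ≤ (L:ℝ) * |a - b| := fun a b => by
    have := hH.dist_le_mul a b
    rwa [Real.dist_eq, Real.dist_eq] at this
  have hHcont : Continuous H := hH.continuous
  have hHgrowth : ∀ t, |H t| ≤ |H 0| + (L:ℝ) * |t| := fun t => by
    have h1 := hHd t 0
    have h2 : |H t| ≤ |H 0| + |H t - H 0| := by
      calc |H t| = |H 0 + (H t - H 0)| := by ring_nf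
        _ ≤ |H 0| + |H t - H 0| := abs_add_le _ _
    simpa using h2.trans (by simpa using add_le_add_left h1 |H 0|)
  -- monotone functions
  have hmono1 : Monotone (fun t => (L:ℝ) * t - H t) := by
    intro s t hst
    have := (abs_le.mp (hHd t s)).2
    simp only []
    nlinarith [abs_of_nonneg (sub_nonneg.mpr hst) ▸ this]
  have hmono2 : Monotone (fun t => (L:ℝ) * t + H t) := by
    intro s t hst
    have := (abs_le.mp (hHd s t)).2
    have habs : |s - t| = t - s := by rw [abs_sub_comm, abs_of_nonneg (sub_nonneg.mpr hst)]
    simp only []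
    nlinarith [habs ▸ this]
  have hint1 : Integrable (fun t => ((L:ℝ) * t - H t) * stdPhi t) := by
    refine integrable_linGrowth_mul_stdPhi (by fun_prop) (a := |H 0|) (b := 2*(L:ℝ)) fun t => ?_
    have := hHgrowth t
    have habs : |(L:ℝ) * t| = (L:ℝ) * |t| := by
      rw [abs_mul, abs_of_nonneg L.coe_nonneg]
    calc |(L:ℝ) * t - H t| ≤ |(L:ℝ)*t| + |H t| := abs_sub _ _
      _ ≤ (L:ℝ)*|t| + (|H 0| + (L:ℝ)*|t|) := by rw [habs]; linarith
      _ = |H 0| + 2*(L:ℝ) * |t| := by ring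
  have hint2 : Integrable (fun t => ((L:ℝ) * t + H t) * stdPhi t) := by
    refine integrable_linGrowth_mul_stdPhi (by fun_prop) (a := |H 0|) (b := 2*(L:ℝ)) fun t => ?_
    have := hHgrowth t
    have habs : |(L:ℝ) * t| = (L:ℝ) * |t| := by
      rw [abs_mul, abs_of_nonneg L.coe_nonneg]
    calc |(L:ℝ) * t + H t| ≤ |(L:ℝ)*t| + |H t| := abs_add_le _ _
      _ ≤ (L:ℝ)*|t| + (|H 0| + (L:ℝ)*|t|) := by rw [habs]; linarith
      _ = |H 0| + 2*(L:ℝ) * |t| := by ring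
  have hintH : Integrable (fun t => H t * stdPhi t) :=
    integrable_linGrowth_mul_stdPhi hHcont (a := |H 0|) (b := (L:ℝ)) hHgrowth
  -- E value
  set E := Ehn h with hEdef
  have hE : E = 2 * ∫ t in Ioi (0:ℝ), H t * stdPhi t := by
    rw [hEdef, Ehn_eq]
    congr 1
    refine setIntegral_congr_fun measurableSet_Ioi fun t ht => ?_
    simp only [hHdef]
    rw [abs_of_nonneg (le_of_lt ht)]
  set J := ∫ t in (0:ℝ)..x, H t * stdPhi t with hJ
  -- interval linearity
  have hivH : IntervalIntegrable (fun t => H t * stdPhi t) volume 0 x :=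
    (hHcont.mul continuous_stdPhi).intervalIntegrable 0 x
  have hivt : IntervalIntegrable (fun t => (L:ℝ) * (t * stdPhi t)) volume 0 x :=
    (continuous_const.mul (continuous_id.mul continuous_stdPhi)).intervalIntegrable 0 x
  have eqiv1 : ∫ t in (0:ℝ)..x, ((L:ℝ) * t - H t) * stdPhi t
      = (L:ℝ) * (stdPhi 0 - stdPhi x) - J := by
    have : (fun t => ((L:ℝ) * t - H t) * stdPhi t)
        = fun t => (L:ℝ) * (t * stdPhi t) - H t * stdPhi t := by funext t; ring
    rw [this, intervalIntegral.integral_sub hivt hivH, intervalIntegral.integral_const_mul,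
      integral_mul_stdPhi_interval]
  have eqiv2 : ∫ t in (0:ℝ)..x, ((L:ℝ) * t + H t) * stdPhi t
      = (L:ℝ) * (stdPhi 0 - stdPhi x) + J := by
    have : (fun t => ((L:ℝ) * t + H t) * stdPhi t)
        = fun t => (L:ℝ) * (t * stdPhi t) + H t * stdPhi t := by funext t; ring
    rw [this, intervalIntegral.integral_add hivt hivH, intervalIntegral.integral_const_mul,
      integral_mul_stdPhi_interval]
  -- Ioi linearity
  have eqIoi1 : ∫ t in Ioi (0:ℝ), ((L:ℝ) * t - H t) * stdPhi t
      = (L:ℝ) * stdPhi 0 - E/2 := by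
    have : (fun t => ((L:ℝ) * t - H t) * stdPhi t)
        = fun t => (L:ℝ) * (t * stdPhi t) - H t * stdPhi t := by funext t; ring
    rw [this, integral_sub ((integrable_mul_stdPhi.const_mul _).integrableOn) hintH.integrableOn,
      integral_const_mul, integral_mul_stdPhi_Ioi, hE]
    ring
  have eqIoi2 : ∫ t in Ioi (0:ℝ), ((L:ℝ) * t + H t) * stdPhi t
      = (L:ℝ) * stdPhi 0 + E/2 := by
    have : (fun t => ((L:ℝ) * t + H t) * stdPhi t)
        = fun t => (L:ℝ) * (t * stdPhi t) + H t * stdPhi t := by funext t; ring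
    rw [this, integral_add ((integrable_mul_stdPhi.const_mul _).integrableOn) hintH.integrableOn,
      integral_const_mul, integral_mul_stdPhi_Ioi, hE]
    ring
  have k1 := key_mono _ hmono1 hint1 hx
  have k2 := key_mono _ hmono2 hint2 hx
  rw [eqiv1, eqIoi1] at k1
  rw [eqiv2, eqIoi2] at k2
  -- representation of fh
  have hIrep : ∫ t in (0:ℝ)..x, (h t - E) * stdPhi t = J - E * (stdCDF x - 1/2) := by
    have hcongr : ∫ t in (0:ℝ)..x, (h t - E) * stdPhi t
        = ∫ t in (0:ℝ)..x, (H t - E) * stdPhi t := by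
      refine intervalIntegral.integral_congr fun t ht => ?_
      rw [Set.uIcc_of_le hx] at ht
      simp only [hHdef]
      rw [abs_of_nonneg ht.1]
    rw [hcongr]
    have : (fun t => (H t - E) * stdPhi t)
        = fun t => H t * stdPhi t - E * stdPhi t := by funext t; ring
    rw [this, intervalIntegral.integral_sub (g := fun t => E * stdPhi t) hivH
      ((continuous_const.mul continuous_stdPhi).intervalIntegrable 0 x),
      intervalIntegral.integral_const_mul, interval_stdPhi, ← hJ]
  have hbound : |J - E * (stdCDF x - 1/2)| ≤ (L:ℝ) * (stdPhi x - 2 * stdPhi 0 * (1 - stdCDF x)) := by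
    rw [abs_le]
    constructor
    · nlinarith [k1]
    · nlinarith [k2]
  have hphix := stdPhi_pos x
  have hfh : |fh h x| = (stdPhi x)⁻¹ * |J - E * (stdCDF x - 1/2)| := by
    unfold fh
    rw [hIrep, abs_mul, abs_of_nonneg (inv_nonneg.mpr hphix.le)]
  have main : |fh h x| ≤ (L:ℝ) * (1 - Real.sqrt (2/Real.pi) * (1 - stdCDF x) / stdPhi x) := by
    rw [hfh, sqrt_two_div_pi]
    calc (stdPhi x)⁻¹ * |J - E * (stdCDF x - 1/2)|
        ≤ (stdPhi x)⁻¹ * ((L:ℝ) * (stdPhi x - 2 * stdPhi 0 * (1 - stdCDF x))) :=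
          mul_le_mul_of_nonneg_left hbound (inv_nonneg.mpr hphix.le)
      _ = (L:ℝ) * (1 - 2 * stdPhi 0 * (1 - stdCDF x) / stdPhi x) := by
          field_simp
  refine ⟨main, main.trans ?_⟩
  have h1 : 0 ≤ Real.sqrt (2/Real.pi) * (1 - stdCDF x) / stdPhi x := by
    apply div_nonneg _ hphix.le
    exact mul_nonneg (Real.sqrt_nonneg _) (by linarith [stdCDF_le_one x])
  nlinarith [L.coe_nonneg, h1]
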